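/- Let K be a field, let S and T be extremally disconnected compact Hausdorff spaces, and let π : S × T → S be the projection. Then the pushforward π_*𝒦 of the constant sheaf of K-modules 𝒦 on S × T is isomorphic, as a sheaf of K-modules on S, to the constant sheaf on S associated with the K-module LocallyConstant(T, K) of locally constant functions from T to K. -/

import Mathlib

open CategoryTheory TopologicalSpace

section Aux
open Opposite

namespace Stmt13

variable (K : Type) [Field K]
variable (X : Type) [TopologicalSpace X] (M : Type) [AddCommGroup M] [Module K M]

/-- The presheaf of locally constant functions with values in `M`. -/
def lcPresheaf : TopCat.Presheaf (ModuleCat K) (TopCat.of X) where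
  obj U := ModuleCat.of K (LocallyConstant U.unop M)
  map {U V} i := ModuleCat.ofHom (LocallyConstant.comapₗ K
    ⟨Set.inclusion i.unop.le, continuous_inclusion i.unop.le⟩)
  map_id U := by
    ext f x
    rfl
  map_comp {U V W} i j := by
    ext f x
    rfl

/-- Local constancy as a local predicate. -/
def lcPred : TopCat.LocalPredicate (fun _ : TopCat.of X => M) where
  pred {U} f := IsLocallyConstant f
  res {U V} i f h := h.comp_continuous (continuous_inclusion i.le)
  locality {U} f w := by
    show IsLocallyConstant f
    rw [IsLocallyConstant.iff_exists_open]
    intro x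
    obtain ⟨V, m, i, p⟩ := w x
    have p' : IsLocallyConstant (fun x : V => f ⟨x.1, i.le x.2⟩) := p
    obtain ⟨W, hW, hWx, hc⟩ := (IsLocallyConstant.iff_exists_open _).1 p' ⟨x.1, m⟩
    obtain ⟨O, hO, hOeq⟩ := isOpen_induced_iff.1 hW
    refine ⟨Subtype.val ⁻¹' (O ∩ (V : Set (TopCat.of X))),
      (isOpen_induced_iff).2 ⟨O ∩ V, hO.inter V.isOpen, rfl⟩, ?_, ?_⟩
    · refine ⟨?_, m⟩
      have : (⟨x.1, m⟩ : V) ∈ W := hWx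
      rw [← hOeq] at this
      exact this
    · intro y hy
      have hyV : y.1 ∈ V := hy.2
      have hyO : (⟨y.1, hyV⟩ : V) ∈ W := by rw [← hOeq]; exact hy.1
      have h1 := hc _ hyO
      have h2 := hc _ hWx
      dsimp at h1 h2
      rw [show y = ⟨y.1, i.le hyV⟩ from rfl] at *
      exact h1.trans h2.symm

/-- Comparison with the subpresheaf of types. -/
def lcTypeIso : lcPresheaf K X M ⋙ forget (ModuleCat K) ≅
    TopCat.subpresheafToTypes (lcPred X M).toPrelocalPredicate :=
  NatIso.ofComponents (fun U => Equiv.toIso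
    { toFun := fun f => ⟨f.1, f.2⟩
      invFun := fun f => ⟨f.1, f.2⟩
      left_inv := fun f => rfl
      right_inv := fun f => rfl })
    (fun {U V} i => rfl)

theorem lcPresheaf_isSheaf : (lcPresheaf K X M).IsSheaf :=
  (TopCat.Presheaf.isSheaf_iff_isSheaf_comp (forget (ModuleCat K)) _).2
    ((Presheaf.isSheaf_of_iso_iff (lcTypeIso K X M)).2
      (TopCat.subpresheafToTypes.isSheaf (lcPred X M)))

/-- The sheaf of locally constant functions with values in `M`. -/
def lcSheaf : TopCat.Sheaf (ModuleCat K) (TopCat.of X) :=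
  ⟨lcPresheaf K X M, lcPresheaf_isSheaf K X M⟩

/-- The canonical morphism from the constant presheaf to the locally constant sheaf. -/
def constToLc : (Functor.const (Opens (TopCat.of X))ᵒᵖ).obj (ModuleCat.of K M) ⟶
    lcPresheaf K X M where
  app U := ModuleCat.ofHom (LocallyConstant.constₗ K)
  naturality {U V} i := by
    ext m x
    rfl

instance : Presheaf.IsLocallyInjective (Opens.grothendieckTopology (TopCat.of X))
    (constToLc K X M) where
  equalizerSieve_mem {U} x y h := by
    intro z hz
    refine ⟨U.unop, 𝟙 _, ?_, hz⟩
    have : x = y := by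
      have := congr_fun (congr_arg (fun (f : LocallyConstant U.unop M) => (f : U.unop → M)) h) ⟨z, hz⟩
      exact this
    simp [this]

instance : Presheaf.IsLocallySurjective (Opens.grothendieckTopology (TopCat.of X))
    (constToLc K X M) where
  imageSieve_mem {U} s := by
    intro z hz
    let s' : LocallyConstant U M := s
    obtain ⟨W, hW, hWz, hc⟩ := (IsLocallyConstant.iff_exists_open _).1 s'.2 ⟨z, hz⟩
    obtain ⟨O, hO, hOeq⟩ := isOpen_induced_iff.1 hW
    refine ⟨U ⊓ ⟨O, hO⟩, homOfLE inf_le_left, ⟨s' ⟨z, hz⟩, ?_⟩, hz, ?_⟩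
    · apply LocallyConstant.ext
      intro x
      show s' ⟨z, hz⟩ = s' ⟨x.1, x.2.1⟩
      have hxO : (⟨x.1, x.2.1⟩ : U) ∈ W := by
        rw [← hOeq]; exact x.2.2
      exact (hc _ hxO).symm
    · show (⟨z, hz⟩ : U) ∈ Subtype.val ⁻¹' O
      rw [hOeq]; exact hWz

section Curry

variable {S T : Type} [TopologicalSpace S] [TopologicalSpace T] [CompactSpace T]

local notation "π" => (TopCat.ofHom (ContinuousMap.fst : C(S × T, S)) : TopCat.of (S × T) ⟶ TopCat.of S)

variable {U : Opens (TopCat.of S)}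

/-- The section of `π` at `u`. -/
def sec (u : U) : C(T, ((Opens.map π).obj U : Opens (TopCat.of (S × T)))) :=
  ⟨fun t => ⟨(u.1, t), u.2⟩, by
    apply Continuous.subtype_mk
    exact continuous_const.prodMk continuous_id⟩

theorem curry_isLocallyConstant (f : LocallyConstant ((Opens.map π).obj U : Opens (TopCat.of (S × T))) K) :
    IsLocallyConstant (fun u : U => f.comap (sec u)) := by
  rw [IsLocallyConstant.iff_exists_open]
  intro u
  have H : ∀ t : T, ∃ (A : Set S) (B : Set T), IsOpen A ∧ IsOpen B ∧ u.1 ∈ A ∧ t ∈ B ∧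
      ∀ (p : ((Opens.map π).obj U : Opens (TopCat.of (S × T)))),
        p.1.1 ∈ A → p.1.2 ∈ B → f p = f ⟨(u.1, t), u.2⟩ := by
    intro t
    obtain ⟨W, hW, hWm, hc⟩ := (IsLocallyConstant.iff_exists_open _).1 f.2 ⟨(u.1, t), u.2⟩
    obtain ⟨O, hO, hOeq⟩ := isOpen_induced_iff.1 hW
    have hmem : ((u.1, t) : S × T) ∈ O := by
      have : (⟨(u.1, t), u.2⟩ : ((Opens.map π).obj U : Opens (TopCat.of (S × T))))
          ∈ Subtype.val ⁻¹' O := by rw [hOeq]; exact hWm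
      exact this
    obtain ⟨A, B, hA, hB, hmA, hmB, hsub⟩ := isOpen_prod_iff.1 hO u.1 t hmem
    refine ⟨A, B, hA, hB, hmA, hmB, fun p hpA hpB => hc p ?_⟩
    rw [← hOeq]
    exact hsub ⟨hpA, hpB⟩
  choose A B hA hB hmA hmB hf using H
  obtain ⟨s, hs⟩ := IsCompact.elim_finite_subcover isCompact_univ B hB
    (fun t _ => Set.mem_iUnion.2 ⟨t, hmB t⟩)
  refine ⟨Subtype.val ⁻¹' (⋂ t ∈ s, A t),
    (isOpen_biInter_finset fun t _ => hA t).preimage continuous_subtype_val,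
    Set.mem_iInter₂.2 fun t _ => hmA t, ?_⟩
  intro y hy
  apply LocallyConstant.ext
  intro t
  obtain ⟨i, his, hti⟩ := Set.mem_iUnion₂.1 (hs (Set.mem_univ t))
  show f (sec y t) = f (sec u t)
  have h1 : f (sec y t) = f ⟨(u.1, i), u.2⟩ :=
    hf i (sec y t) (Set.mem_iInter₂.1 hy i his) hti
  have h2 : f (sec u t) = f ⟨(u.1, i), u.2⟩ := hf i (sec u t) (hmA i) hti
  rw [h1, h2]

/-- Currying for locally constant functions. -/
def curryEquiv : LocallyConstant ((Opens.map π).obj U : Opens (TopCat.of (S × T))) K ≃ₗ[K]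
    LocallyConstant U (LocallyConstant T K) where
  toFun f := ⟨fun u => f.comap (sec u), curry_isLocallyConstant K f⟩
  invFun g :=
    ⟨fun p => g ⟨p.1.1, p.2⟩ p.1.2, by
      rw [IsLocallyConstant.iff_exists_open]
      rintro ⟨⟨x, t⟩, hx⟩
      obtain ⟨V, hV, hVm, hcV⟩ := (IsLocallyConstant.iff_exists_open _).1 g.2 ⟨x, hx⟩
      obtain ⟨O, hO, hOeq⟩ := isOpen_induced_iff.1 hV
      obtain ⟨W, hWo, hWm, hcW⟩ := (IsLocallyConstant.iff_exists_open _).1 (g ⟨x, hx⟩).2 t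
      refine ⟨Subtype.val ⁻¹' (O ×ˢ W),
        ((hO.prod hWo).preimage continuous_subtype_val), ⟨?_, hWm⟩, ?_⟩
      · have : (⟨x, hx⟩ : U) ∈ Subtype.val ⁻¹' O := by rw [hOeq]; exact hVm
        exact this
      · rintro ⟨⟨y, r⟩, hy⟩ ⟨hyO, hrW⟩
        have h1 : g ⟨y, hy⟩ = g ⟨x, hx⟩ := hcV ⟨y, hy⟩ (by
          rw [← hOeq]; exact hyO)
        show g ⟨y, hy⟩ r = g ⟨x, hx⟩ t
        rw [h1]
        exact hcW r hrW⟩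
  left_inv f := by
    apply LocallyConstant.ext
    rintro ⟨⟨x, t⟩, hx⟩
    rfl
  right_inv g := by
    apply LocallyConstant.ext
    intro u
    apply LocallyConstant.ext
    intro t
    rfl
  map_add' f g := by
    apply LocallyConstant.ext
    intro u
    apply LocallyConstant.ext
    intro t
    rfl
  map_smul' c f := by
    apply LocallyConstant.ext
    intro u
    apply LocallyConstant.ext
    intro t
    rfl

/-- The natural transformation from pushforward of curry components. -/
noncomputable def pushIso (S T : Type) [TopologicalSpace S] [TopologicalSpace T] [CompactSpace T] :
    (TopCat.Sheaf.pushforward (ModuleCat K) (X := TopCat.of (S × T)) (Y := TopCat.of S)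
        (TopCat.ofHom ContinuousMap.fst)).obj (lcSheaf K (S × T) K) ≅
      lcSheaf K S (LocallyConstant T K) :=
  (sheafToPresheaf _ _).preimageIso (NatIso.ofComponents
    (fun U => (curryEquiv K (U := U.unop)).toModuleIso)
    (fun {U V} i => by
      ext f
      apply LocallyConstant.ext
      intro u
      apply LocallyConstant.ext
      intro t
      rfl))

end Curry

/-- The constant sheaf is isomorphic to the sheaf of locally constant functions. -/
noncomputable def constIsoLc :
    (constantSheaf (Opens.grothendieckTopology (TopCat.of X)) (ModuleCat K)).obj
      (ModuleCat.of K M) ≅ lcSheaf K X M :=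
  haveI : IsIso ((presheafToSheaf (Opens.grothendieckTopology (TopCat.of X))
      (ModuleCat K)).map (constToLc K X M)) :=
    ((Opens.grothendieckTopology (TopCat.of X)).W_iff (constToLc K X M)).1
      ((Opens.grothendieckTopology (TopCat.of X)).W_of_isLocallyBijective (constToLc K X M))
  @asIso _ _ _ _ ((presheafToSheaf (Opens.grothendieckTopology (TopCat.of X))
      (ModuleCat K)).map (constToLc K X M)) this ≪≫ (sheafificationIso (lcSheaf K X M)).symm

end Stmt13

end Aux

/-- For a field `K` and extremally disconnected compact Hausdorff spaces
`S` and `T`, the pushforward along the projection `π : S × T → S` of the constant sheaf of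
`K`-modules with value `K` on `S × T` is isomorphic, as a sheaf of `K`-modules on `S`, to the
constant sheaf on `S` associated with the `K`-module `LocallyConstant T K` of locally
constant functions from `T` to `K`. -/
theorem stmt_13 (K : Type) [Field K]
    (S T : Type) [TopologicalSpace S] [CompactSpace S] [T2Space S] [ExtremallyDisconnected S]
    [TopologicalSpace T] [CompactSpace T] [T2Space T] [ExtremallyDisconnected T] :
    Nonempty
      (((TopCat.Sheaf.pushforward (ModuleCat K)
            (X := TopCat.of (S × T)) (Y := TopCat.of S) (TopCat.ofHom ContinuousMap.fst)).obj
          ((constantSheaf (Opens.grothendieckTopology (S × T)) (ModuleCat K)).obj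
            (ModuleCat.of K K))) ≅
        ((constantSheaf (Opens.grothendieckTopology S) (ModuleCat K)).obj
          (ModuleCat.of K (LocallyConstant T K)))) := by
  exact ⟨(TopCat.Sheaf.pushforward (ModuleCat K) (X := TopCat.of (S × T)) (Y := TopCat.of S)
      (TopCat.ofHom ContinuousMap.fst)).mapIso (Stmt13.constIsoLc K (S × T) K) ≪≫
    Stmt13.pushIso K S T ≪≫ (Stmt13.constIsoLc K S (LocallyConstant T K)).symm⟩
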